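/- Let a : ℕ → ℝ satisfy a(n) > 1 for every n ≥ 1, and define A : ℕ → ℝ by A(0) = 1 and A(N) = (1/N) ∑_{n=1}^{N} a(n)·A(N−n) for N ≥ 1. Then for every N ≥ 1, A(N) − A(N−1) ≥ (a(1) − 1)^N / N!, and consequently A(N) ≥ ∑_{M=0}^{N} (a(1) − 1)^M / M! for every N ≥ 0 (so lim inf_{N→∞} A(N) ≥ exp(a(1) − 1)). -/

import Mathlib

/-- If `a n > 1` for `n ≥ 1` and `A 0 = 1`, `A N = (1/N) ∑_{n=1}^N a n * A (N-n)` for `N ≥ 1`,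
then `A N - A (N-1) ≥ (a 1 - 1)^N / N!`, hence `A N ≥ ∑_{M=0}^N (a 1 - 1)^M / M!`,
so that `liminf A ≥ exp (a 1 - 1)`. -/
theorem recursion_lower_bounds (a : ℕ → ℝ) (ha : ∀ n, 1 ≤ n → 1 < a n)
    (A : ℕ → ℝ) (hA0 : A 0 = 1)
    (hrec : ∀ N, 1 ≤ N →
      A N = (1 / (N : ℝ)) * ∑ n ∈ Finset.Icc 1 N, a n * A (N - n)) :
    (∀ N, 1 ≤ N → (a 1 - 1) ^ N / (Nat.factorial N : ℝ) ≤ A N - A (N - 1)) ∧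
    (∀ N : ℕ, ∑ M ∈ Finset.range (N + 1), (a 1 - 1) ^ M / (Nat.factorial M : ℝ) ≤ A N) ∧
    (Real.exp (a 1 - 1) : EReal) ≤ Filter.liminf (fun N => (A N : EReal)) Filter.atTop := by
  have hc : 0 < a 1 - 1 := sub_pos.2 (ha 1 le_rfl)
  set c : ℝ := a 1 - 1 with hc_def
  -- telescoping
  have htel : ∀ N, A N = 1 + ∑ k ∈ Finset.Icc 1 N, (A k - A (k - 1)) := by
    intro N
    induction N with
    | zero => simp [hA0]
    | succ n ih =>
        rw [Finset.sum_Icc_succ_top (by omega : 1 ≤ n + 1)]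
        simp only [Nat.add_sub_cancel]
        linarith
  -- multiplied recursion
  have hmul : ∀ N : ℕ, 1 ≤ N → (N : ℝ) * A N = ∑ n ∈ Finset.Icc 1 N, a n * A (N - n) := by
    intro N hN
    have hN0 : (N : ℝ) ≠ 0 := Nat.cast_ne_zero.2 (by omega)
    rw [hrec N hN]
    field_simp
  -- main bound by strong induction
  have hd : ∀ N, 1 ≤ N → c ^ N / (Nat.factorial N : ℝ) ≤ A N - A (N - 1) := by
    intro N
    induction N using Nat.strong_induction_on with
    | _ N ih =>
      intro hN
      rcases N with _ | n
      · omega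
      rcases Nat.eq_zero_or_pos n with rfl | hn1
      · -- N = 1
        have h1 : A 1 = a 1 := by
          have := hrec 1 le_rfl
          simpa [hA0] using this
        simp [h1, hA0, Nat.factorial, hc_def]
      -- N = n + 1, 1 ≤ n
      have h1 := hmul (n + 1) (by omega)
      have h2 := hmul n hn1
      rw [Finset.sum_Icc_succ_top (by omega : 1 ≤ n + 1)] at h1
      simp only [Nat.sub_self, hA0, mul_one] at h1
      push_cast at h1
      have hsum : ∑ j ∈ Finset.Icc 1 n, a j * (A (n + 1 - j) - A (n - j))
          = (∑ j ∈ Finset.Icc 1 n, a j * A (n + 1 - j))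
            - ∑ j ∈ Finset.Icc 1 n, a j * A (n - j) := by
        rw [← Finset.sum_sub_distrib]
        exact Finset.sum_congr rfl fun j _ => by ring
      have key : ((n : ℝ) + 1) * (A (n + 1) - A n)
          = a (n + 1) - A n
            + ∑ j ∈ Finset.Icc 1 n, a j * (A (n + 1 - j) - A (n - j)) := by
        linarith [h1, h2, hsum]
      -- bounds for earlier differences
      have hdk : ∀ k, 1 ≤ k → k ≤ n → c ^ k / (Nat.factorial k : ℝ) ≤ A k - A (k - 1) :=
        fun k hk1 hk2 => ih k (by omega) hk1
      have hdpos : ∀ k, 1 ≤ k → k ≤ n → 0 < A k - A (k - 1) := fun k hk1 hk2 =>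
        lt_of_lt_of_le (by positivity) (hdk k hk1 hk2)
      -- split off the j = 1 term
      have hmem : (1 : ℕ) ∈ Finset.Icc 1 n := Finset.mem_Icc.2 ⟨le_rfl, hn1⟩
      have hsplit1 : ∑ j ∈ Finset.Icc 1 n, a j * (A (n + 1 - j) - A (n - j))
          = a 1 * (A n - A (n - 1))
            + ∑ j ∈ (Finset.Icc 1 n).erase 1, a j * (A (n + 1 - j) - A (n - j)) := by
        rw [← Finset.add_sum_erase _ _ hmem]
        norm_num
      have hsplit2 : ∑ j ∈ Finset.Icc 1 n, (A (n + 1 - j) - A (n - j))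
          = (A n - A (n - 1))
            + ∑ j ∈ (Finset.Icc 1 n).erase 1, (A (n + 1 - j) - A (n - j)) := by
        rw [← Finset.add_sum_erase _ _ hmem]
        norm_num
      have herase : ∀ j ∈ (Finset.Icc 1 n).erase 1,
          (A (n + 1 - j) - A (n - j)) ≤ a j * (A (n + 1 - j) - A (n - j)) := by
        intro j hj
        have hj' := Finset.mem_Icc.1 (Finset.mem_of_mem_erase hj)
        have hk1 : 1 ≤ n + 1 - j := by omega
        have hk2 : n + 1 - j ≤ n := by omega
        have heq : n - j = (n + 1 - j) - 1 := by omega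
        have hp := hdpos (n + 1 - j) hk1 hk2
        rw [heq]
        nlinarith [le_of_lt (ha j hj'.1)]
      have hsum_ge : c * (A n - A (n - 1))
            + ∑ j ∈ Finset.Icc 1 n, (A (n + 1 - j) - A (n - j))
          ≤ ∑ j ∈ Finset.Icc 1 n, a j * (A (n + 1 - j) - A (n - j)) := by
        rw [hsplit1, hsplit2]
        have := Finset.sum_le_sum herase
        have ha1 : a 1 * (A n - A (n - 1))
            = c * (A n - A (n - 1)) + (A n - A (n - 1)) := by
          rw [hc_def]; ring
        linarith
      -- reindex
      have hre : ∑ j ∈ Finset.Icc 1 n, (A (n + 1 - j) - A (n - j))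
          = ∑ k ∈ Finset.Icc 1 n, (A k - A (k - 1)) := by
        apply Finset.sum_nbij' (i := fun j => n + 1 - j) (j := fun k => n + 1 - k)
        · intro j hj; simp only [Finset.mem_Icc] at *; omega
        · intro k hk; simp only [Finset.mem_Icc] at *; omega
        · intro j hj; simp only [Finset.mem_Icc] at hj; omega
        · intro k hk; simp only [Finset.mem_Icc] at hk; omega
        · intro j hj
          simp only [Finset.mem_Icc] at hj
          congr 1 <;> congr 1 <;> omega
      rw [hre] at hsum_ge
      have hAm : A n = 1 + ∑ k ∈ Finset.Icc 1 n, (A k - A (k - 1)) := htel n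
      have haN : 1 ≤ a (n + 1) := le_of_lt (ha (n + 1) (by omega))
      have hdm : c ^ n / (Nat.factorial n : ℝ) ≤ A n - A (n - 1) := hdk n hn1 le_rfl
      have hfinal : c * (c ^ n / (Nat.factorial n : ℝ))
          ≤ ((n : ℝ) + 1) * (A (n + 1) - A n) := by
        have h3 : c * (c ^ n / (Nat.factorial n : ℝ)) ≤ c * (A n - A (n - 1)) :=
          mul_le_mul_of_nonneg_left hdm (le_of_lt hc)
        calc c * (c ^ n / (Nat.factorial n : ℝ)) ≤ c * (A n - A (n - 1)) := h3
          _ ≤ a (n + 1) - 1 + c * (A n - A (n - 1)) := by linarith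
          _ = a (n + 1) - A n
              + (c * (A n - A (n - 1)) + ∑ k ∈ Finset.Icc 1 n, (A k - A (k - 1))) := by
            rw [hAm]; ring
          _ ≤ a (n + 1) - A n
              + ∑ j ∈ Finset.Icc 1 n, a j * (A (n + 1 - j) - A (n - j)) := by
            linarith [hsum_ge]
          _ = ((n : ℝ) + 1) * (A (n + 1) - A n) := key.symm
      have hn1R : (0 : ℝ) < (n : ℝ) + 1 := by positivity
      have heq : c ^ (n + 1) / (Nat.factorial (n + 1) : ℝ)
          = (c * (c ^ n / (Nat.factorial n : ℝ))) / ((n : ℝ) + 1) := by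
        rw [Nat.factorial_succ]
        have hfn : (Nat.factorial n : ℝ) ≠ 0 := Nat.cast_ne_zero.2 (Nat.factorial_ne_zero n)
        push_cast
        field_simp
        ring
      simp only [Nat.add_sub_cancel]
      rw [heq, div_le_iff₀ hn1R]
      calc c * (c ^ n / (Nat.factorial n : ℝ)) ≤ ((n : ℝ) + 1) * (A (n + 1) - A n) := hfinal
        _ = (A (n + 1) - A n) * ((n : ℝ) + 1) := by ring
  -- second statement
  have h2 : ∀ N : ℕ, ∑ M ∈ Finset.range (N + 1), c ^ M / (Nat.factorial M : ℝ) ≤ A N := by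
    intro N
    rw [htel N, Finset.sum_range_succ']
    simp only [Nat.factorial_zero, pow_zero, Nat.cast_one, div_one]
    have hIcc : ∑ k ∈ Finset.Icc 1 N, (A k - A (k - 1))
        = ∑ i ∈ Finset.range N, (A (1 + i) - A (1 + i - 1)) := by
      rw [← Finset.Ico_add_one_right_eq_Icc, Finset.sum_Ico_eq_sum_range]
      simp
    rw [hIcc]
    have : ∑ i ∈ Finset.range N, c ^ (i + 1) / (Nat.factorial (i + 1) : ℝ)
        ≤ ∑ i ∈ Finset.range N, (A (1 + i) - A (1 + i - 1)) := by
      apply Finset.sum_le_sum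
      intro i _
      have := hd (1 + i) (by omega)
      simpa [Nat.add_comm] using this
    linarith
  refine ⟨hd, h2, ?_⟩
  -- liminf statement
  have hexp : HasSum (fun m => c ^ m / (Nat.factorial m : ℝ)) (Real.exp c) := by
    rw [Real.exp_eq_exp_ℝ, NormedSpace.exp_eq_tsum_div]
    exact (NormedSpace.expSeries_div_summable c).hasSum
  have hS : Filter.Tendsto (fun N => ∑ M ∈ Finset.range (N + 1), c ^ M / (Nat.factorial M : ℝ))
      Filter.atTop (nhds (Real.exp c)) :=
    hexp.tendsto_sum_nat.comp (Filter.tendsto_add_atTop_nat 1)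
  have hSE : Filter.Tendsto
      (fun N => ((∑ M ∈ Finset.range (N + 1), c ^ M / (Nat.factorial M : ℝ) : ℝ) : EReal))
      Filter.atTop (nhds ((Real.exp c : ℝ) : EReal)) :=
    (continuous_coe_real_ereal.tendsto _).comp hS
  have hlim : Filter.liminf
      (fun N => ((∑ M ∈ Finset.range (N + 1), c ^ M / (Nat.factorial M : ℝ) : ℝ) : EReal))
      Filter.atTop = ((Real.exp c : ℝ) : EReal) := hSE.liminf_eq
  rw [← hlim]
  exact Filter.liminf_le_liminf
    (Filter.Eventually.of_forall fun N => EReal.coe_le_coe_iff.2 (h2 N))
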